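/- For every λ with 0 < λ < 1 and every μ ≥ 1, there exists a unique pair (γ*, β*) ∈ [0,1]×[0,1] maximizing the function f(γ,β) := ((μ−1)/2)·log(1 + γ·P1/σ²) + R_sum(γ,β) + (λ/2)·log(Q / D(γ,β)) over [0,1]×[0,1]; i.e., f attains its supremum over the square at exactly one point. -/

import Mathlib

noncomputable def Lfun (P1 P2 Q σ2 γ β : ℝ) : ℝ :=
  P1 + P2 + Q + σ2 + 2 * Real.sqrt ((1 - γ) * P1 * Q) + 2 * Real.sqrt ((1 - β) * P2 * Q)
    + 2 * Real.sqrt ((1 - γ) * (1 - β) * P1 * P2)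

noncomputable def Dfun (P1 P2 Q σ2 γ β : ℝ) : ℝ :=
  Q * (σ2 + γ * P1 + β * P2) / Lfun P1 P2 Q σ2 γ β

noncomputable def Rsum (P1 P2 σ2 γ β : ℝ) : ℝ :=
  (1 / 2) * Real.log (1 + (γ * P1 + β * P2) / σ2)

open Real Set

/-- the square domain -/
def Sq : Set (ℝ × ℝ) := Set.Icc (0:ℝ) 1 ×ˢ Set.Icc (0:ℝ) 1

/-- the simplified objective -/
noncomputable def Ffun (P1 P2 Q σ2 lam μ : ℝ) (p : ℝ × ℝ) : ℝ :=
  ((μ - 1) / 2) * Real.log (σ2 + p.1 * P1)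
    + ((1 - lam) / 2) * Real.log (σ2 + p.1 * P1 + p.2 * P2)
    + (lam / 2) * Real.log (Lfun P1 P2 Q σ2 p.1 p.2)

lemma gm_aux {p q r s a b : ℝ} (hp : 0 ≤ p) (hq : 0 ≤ q) (hr : 0 ≤ r) (hs : 0 ≤ s)
    (ha : 0 ≤ a) (hb : 0 ≤ b) :
    a * (p * q) + b * (r * s) ≤ Real.sqrt ((a * p ^ 2 + b * r ^ 2) * (a * q ^ 2 + b * s ^ 2)) := by
  rw [Real.le_sqrt (by positivity) (by positivity)]
  nlinarith [mul_nonneg (mul_nonneg ha hb) (sq_nonneg (p * s - r * q))]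

lemma gm_concave {u1 u2 v1 v2 a b : ℝ} (hu1 : 0 ≤ u1) (hu2 : 0 ≤ u2) (hv1 : 0 ≤ v1)
    (hv2 : 0 ≤ v2) (ha : 0 ≤ a) (hb : 0 ≤ b) :
    a * Real.sqrt (u1 * u2) + b * Real.sqrt (v1 * v2)
      ≤ Real.sqrt ((a * u1 + b * v1) * (a * u2 + b * v2)) := by
  rw [Real.sqrt_mul hu1, Real.sqrt_mul hv1]
  have h := gm_aux (Real.sqrt_nonneg u1) (Real.sqrt_nonneg u2) (Real.sqrt_nonneg v1)
    (Real.sqrt_nonneg v2) ha hb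
  rwa [Real.sq_sqrt hu1, Real.sq_sqrt hu2, Real.sq_sqrt hv1, Real.sq_sqrt hv2] at h

lemma Lfun_pos {P1 P2 Q σ2 : ℝ} (hP1 : 0 < P1) (hP2 : 0 < P2) (hQ : 0 < Q) (hσ : 0 < σ2)
    (γ β : ℝ) : 0 < Lfun P1 P2 Q σ2 γ β := by
  have a1 := Real.sqrt_nonneg ((1 - γ) * P1 * Q)
  have a2 := Real.sqrt_nonneg ((1 - β) * P2 * Q)
  have a3 := Real.sqrt_nonneg ((1 - γ) * (1 - β) * P1 * P2)
  unfold Lfun; linarith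

lemma L_combo_lt {P1 P2 Q σ2 : ℝ} (hP1 : 0 < P1) (hP2 : 0 < P2) (hQ : 0 < Q)
    (hσ : 0 < σ2) {x y : ℝ × ℝ} (hx : x ∈ Sq) (hy : y ∈ Sq) (hne : x ≠ y)
    {a b : ℝ} (ha : 0 < a) (hb : 0 < b) (hab : a + b = 1) :
    a * Lfun P1 P2 Q σ2 x.1 x.2 + b * Lfun P1 P2 Q σ2 y.1 y.2
      < Lfun P1 P2 Q σ2 (a * x.1 + b * y.1) (a * x.2 + b * y.2) := by
  obtain ⟨⟨hx1, hx1'⟩, hx2, hx2'⟩ := hx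
  obtain ⟨⟨hy1, hy1'⟩, hy2, hy2'⟩ := hy
  -- term 1 : nonstrict
  have harg1 : (1 - (a * x.1 + b * y.1)) * P1 * Q
      = a • ((1 - x.1) * P1 * Q) + b • ((1 - y.1) * P1 * Q) := by
    simp only [smul_eq_mul]; linear_combination -P1 * Q * hab
  have hm1x : (1 - x.1) * P1 * Q ∈ Set.Ici (0:ℝ) :=
    mem_Ici.2 (mul_nonneg (mul_nonneg (by linarith) hP1.le) hQ.le)
  have hm1y : (1 - y.1) * P1 * Q ∈ Set.Ici (0:ℝ) :=
    mem_Ici.2 (mul_nonneg (mul_nonneg (by linarith) hP1.le) hQ.le)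
  have t1 : a * Real.sqrt ((1 - x.1) * P1 * Q) + b * Real.sqrt ((1 - y.1) * P1 * Q)
      ≤ Real.sqrt ((1 - (a * x.1 + b * y.1)) * P1 * Q) := by
    rw [harg1]
    simpa using Real.strictConcaveOn_sqrt.concaveOn.2 hm1x hm1y ha.le hb.le hab
  -- term 2 : nonstrict
  have harg2 : (1 - (a * x.2 + b * y.2)) * P2 * Q
      = a • ((1 - x.2) * P2 * Q) + b • ((1 - y.2) * P2 * Q) := by
    simp only [smul_eq_mul]; linear_combination -P2 * Q * hab
  have hm2x : (1 - x.2) * P2 * Q ∈ Set.Ici (0:ℝ) :=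
    mem_Ici.2 (mul_nonneg (mul_nonneg (by linarith) hP2.le) hQ.le)
  have hm2y : (1 - y.2) * P2 * Q ∈ Set.Ici (0:ℝ) :=
    mem_Ici.2 (mul_nonneg (mul_nonneg (by linarith) hP2.le) hQ.le)
  have t2 : a * Real.sqrt ((1 - x.2) * P2 * Q) + b * Real.sqrt ((1 - y.2) * P2 * Q)
      ≤ Real.sqrt ((1 - (a * x.2 + b * y.2)) * P2 * Q) := by
    rw [harg2]
    simpa using Real.strictConcaveOn_sqrt.concaveOn.2 hm2x hm2y ha.le hb.le hab
  -- term 3 : geometric mean, nonstrict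
  have e1 : (1 - x.1) * (1 - x.2) * P1 * P2 = ((1 - x.1) * P1) * ((1 - x.2) * P2) := by ring
  have e2 : (1 - y.1) * (1 - y.2) * P1 * P2 = ((1 - y.1) * P1) * ((1 - y.2) * P2) := by ring
  have w1 : 1 - (a * x.1 + b * y.1) = a * (1 - x.1) + b * (1 - y.1) := by linarith
  have w2 : 1 - (a * x.2 + b * y.2) = a * (1 - x.2) + b * (1 - y.2) := by linarith
  have e3 : (1 - (a * x.1 + b * y.1)) * (1 - (a * x.2 + b * y.2)) * P1 * P2
      = (a * ((1 - x.1) * P1) + b * ((1 - y.1) * P1))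
        * (a * ((1 - x.2) * P2) + b * ((1 - y.2) * P2)) := by
    rw [w1, w2]; ring
  have t3 : a * Real.sqrt ((1 - x.1) * (1 - x.2) * P1 * P2)
        + b * Real.sqrt ((1 - y.1) * (1 - y.2) * P1 * P2)
      ≤ Real.sqrt ((1 - (a * x.1 + b * y.1)) * (1 - (a * x.2 + b * y.2)) * P1 * P2) := by
    rw [e1, e2, e3]
    exact gm_concave (mul_nonneg (by linarith) hP1.le) (mul_nonneg (by linarith) hP2.le)
      (mul_nonneg (by linarith) hP1.le) (mul_nonneg (by linarith) hP2.le) ha.le hb.le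
  have hC : a * (P1 + P2 + Q + σ2) + b * (P1 + P2 + Q + σ2) = P1 + P2 + Q + σ2 := by
    linear_combination (P1 + P2 + Q + σ2) * hab
  have hcase : x.1 ≠ y.1 ∨ x.2 ≠ y.2 := by
    by_contra h
    push_neg at h
    exact hne (Prod.ext h.1 h.2)
  rcases hcase with h1 | h2
  · -- strictness from term 1
    have hargne : (1 - x.1) * P1 * Q ≠ (1 - y.1) * P1 * Q := by
      intro h
      have h' : ((1 - x.1) - (1 - y.1)) * (P1 * Q) = 0 := by linear_combination h
      rcases mul_eq_zero.1 h' with h'' | h''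
      · exact h1 (by linarith)
      · exact absurd h'' (by positivity)
    have t1' : a * Real.sqrt ((1 - x.1) * P1 * Q) + b * Real.sqrt ((1 - y.1) * P1 * Q)
        < Real.sqrt ((1 - (a * x.1 + b * y.1)) * P1 * Q) := by
      rw [harg1]
      simpa using Real.strictConcaveOn_sqrt.2 hm1x hm1y hargne ha hb hab
    simp only [Lfun]
    linarith
  · have hargne : (1 - x.2) * P2 * Q ≠ (1 - y.2) * P2 * Q := by
      intro h
      have h' : ((1 - x.2) - (1 - y.2)) * (P2 * Q) = 0 := by linear_combination h
      rcases mul_eq_zero.1 h' with h'' | h''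
      · exact h2 (by linarith)
      · exact absurd h'' (by positivity)
    have t2' : a * Real.sqrt ((1 - x.2) * P2 * Q) + b * Real.sqrt ((1 - y.2) * P2 * Q)
        < Real.sqrt ((1 - (a * x.2 + b * y.2)) * P2 * Q) := by
      rw [harg2]
      simpa using Real.strictConcaveOn_sqrt.2 hm2x hm2y hargne ha hb hab
    simp only [Lfun]
    linarith

set_option maxHeartbeats 1000000 in
lemma F_strictConcave {P1 P2 Q σ2 lam μ : ℝ} (hP1 : 0 < P1) (hP2 : 0 < P2) (hQ : 0 < Q)
    (hσ : 0 < σ2) (hlam : 0 < lam) (hlam1 : lam < 1) (hμ : 1 ≤ μ) :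
    StrictConcaveOn ℝ Sq (Ffun P1 P2 Q σ2 lam μ) := by
  constructor
  · exact (convex_Icc (0:ℝ) 1).prod (convex_Icc (0:ℝ) 1)
  intro x hx y hy hne a b ha hb hab
  obtain ⟨⟨hx1, hx1'⟩, hx2, hx2'⟩ := hx
  obtain ⟨⟨hy1, hy1'⟩, hy2, hy2'⟩ := hy
  have hz1 : (a • x + b • y).1 = a * x.1 + b * y.1 := by
    simp [Prod.fst_add, Prod.smul_fst, smul_eq_mul]
  have hz2 : (a • x + b • y).2 = a * x.2 + b * y.2 := by
    simp [Prod.snd_add, Prod.smul_snd, smul_eq_mul]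
  -- piece 1
  have hp1x : (0:ℝ) < σ2 + x.1 * P1 := by nlinarith
  have hp1y : (0:ℝ) < σ2 + y.1 * P1 := by nlinarith
  have harg1 : σ2 + (a * x.1 + b * y.1) * P1
      = a • (σ2 + x.1 * P1) + b • (σ2 + y.1 * P1) := by
    simp only [smul_eq_mul]; linear_combination -σ2 * hab
  have h1 : a * Real.log (σ2 + x.1 * P1) + b * Real.log (σ2 + y.1 * P1)
      ≤ Real.log (σ2 + (a * x.1 + b * y.1) * P1) := by
    rw [harg1]
    simpa using strictConcaveOn_log_Ioi.concaveOn.2 (mem_Ioi.2 hp1x) (mem_Ioi.2 hp1y)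
      ha.le hb.le hab
  -- piece 2
  have hp2x : (0:ℝ) < σ2 + x.1 * P1 + x.2 * P2 := by nlinarith
  have hp2y : (0:ℝ) < σ2 + y.1 * P1 + y.2 * P2 := by nlinarith
  have harg2 : σ2 + (a * x.1 + b * y.1) * P1 + (a * x.2 + b * y.2) * P2
      = a • (σ2 + x.1 * P1 + x.2 * P2) + b • (σ2 + y.1 * P1 + y.2 * P2) := by
    simp only [smul_eq_mul]; linear_combination -σ2 * hab
  have h2 : a * Real.log (σ2 + x.1 * P1 + x.2 * P2) + b * Real.log (σ2 + y.1 * P1 + y.2 * P2)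
      ≤ Real.log (σ2 + (a * x.1 + b * y.1) * P1 + (a * x.2 + b * y.2) * P2) := by
    rw [harg2]
    simpa using strictConcaveOn_log_Ioi.concaveOn.2 (mem_Ioi.2 hp2x) (mem_Ioi.2 hp2y)
      ha.le hb.le hab
  -- piece 3
  have hLx := Lfun_pos hP1 hP2 hQ hσ x.1 x.2
  have hLy := Lfun_pos hP1 hP2 hQ hσ y.1 y.2
  have hsum : 0 < a * Lfun P1 P2 Q σ2 x.1 x.2 + b * Lfun P1 P2 Q σ2 y.1 y.2 := by positivity
  have hlt := L_combo_lt hP1 hP2 hQ hσ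
    ⟨⟨hx1, hx1'⟩, hx2, hx2'⟩ ⟨⟨hy1, hy1'⟩, hy2, hy2'⟩ hne ha hb hab
  have h3 : a * Real.log (Lfun P1 P2 Q σ2 x.1 x.2) + b * Real.log (Lfun P1 P2 Q σ2 y.1 y.2)
      < Real.log (Lfun P1 P2 Q σ2 (a * x.1 + b * y.1) (a * x.2 + b * y.2)) :=
    calc a * Real.log (Lfun P1 P2 Q σ2 x.1 x.2) + b * Real.log (Lfun P1 P2 Q σ2 y.1 y.2)
        ≤ Real.log (a * Lfun P1 P2 Q σ2 x.1 x.2 + b * Lfun P1 P2 Q σ2 y.1 y.2) := by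
          simpa using strictConcaveOn_log_Ioi.concaveOn.2 (mem_Ioi.2 hLx) (mem_Ioi.2 hLy)
            ha.le hb.le hab
      _ < _ := Real.log_lt_log hsum hlt
  have hc1 : (0:ℝ) ≤ (μ - 1) / 2 := by linarith
  have hc2 : (0:ℝ) ≤ (1 - lam) / 2 := by linarith
  have hc3 : (0:ℝ) < lam / 2 := by linarith
  have k1 := mul_le_mul_of_nonneg_left h1 hc1
  have k2 := mul_le_mul_of_nonneg_left h2 hc2
  have k3 := mul_lt_mul_of_pos_left h3 hc3
  simp only [smul_eq_mul, Ffun, hz1, hz2]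
  linarith [k1, k2, k3]

lemma F_contOn {P1 P2 Q σ2 lam μ : ℝ} (hP1 : 0 < P1) (hP2 : 0 < P2) (hQ : 0 < Q)
    (hσ : 0 < σ2) : ContinuousOn (Ffun P1 P2 Q σ2 lam μ) Sq := by
  have hLcont : Continuous (fun p : ℝ × ℝ => Lfun P1 P2 Q σ2 p.1 p.2) := by
    unfold Lfun; fun_prop
  apply ContinuousOn.add
  apply ContinuousOn.add
  · refine continuousOn_const.mul (ContinuousOn.log (by fun_prop) fun p hp => ?_)
    have h1 : 0 ≤ p.1 := hp.1.1
    nlinarith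
  · refine continuousOn_const.mul (ContinuousOn.log (by fun_prop) fun p hp => ?_)
    have h1 : 0 ≤ p.1 := hp.1.1
    have h2 : 0 ≤ p.2 := hp.2.1
    nlinarith
  · exact continuousOn_const.mul (ContinuousOn.log hLcont.continuousOn
      fun p _ => (Lfun_pos hP1 hP2 hQ hσ p.1 p.2).ne')

lemma F_existsUnique {P1 P2 Q σ2 lam μ : ℝ} (hP1 : 0 < P1) (hP2 : 0 < P2) (hQ : 0 < Q)
    (hσ : 0 < σ2) (hlam : 0 < lam) (hlam1 : lam < 1) (hμ : 1 ≤ μ) :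
    ∃! p : ℝ × ℝ, p ∈ Sq ∧ ∀ q ∈ Sq, Ffun P1 P2 Q σ2 lam μ q ≤ Ffun P1 P2 Q σ2 lam μ p := by
  have hSc : IsCompact Sq := (isCompact_Icc).prod isCompact_Icc
  have hSne : Sq.Nonempty := ⟨(0, 0), ⟨⟨le_refl 0, zero_le_one⟩, ⟨le_refl 0, zero_le_one⟩⟩⟩
  obtain ⟨p, hpS, hp⟩ := hSc.exists_isMaxOn hSne (F_contOn hP1 hP2 hQ hσ (lam := lam) (μ := μ))
  have hstrict := F_strictConcave hP1 hP2 hQ hσ hlam hlam1 hμ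
  refine ⟨p, ⟨hpS, fun q hq => hp hq⟩, ?_⟩
  rintro q ⟨hqS, hqmax⟩
  by_contra hne
  have heq : Ffun P1 P2 Q σ2 lam μ p = Ffun P1 P2 Q σ2 lam μ q :=
    le_antisymm (hqmax p hpS) (hp hqS)
  have hmem : (1/2 : ℝ) • q + (1/2 : ℝ) • p ∈ Sq :=
    hstrict.1 hqS hpS (by norm_num) (by norm_num) (by norm_num)
  have hkey := hstrict.2 hqS hpS hne (by norm_num : (0:ℝ) < 1/2) (by norm_num : (0:ℝ) < 1/2)
    (by norm_num)
  have hle := hqmax _ hmem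
  simp only [smul_eq_mul] at hkey
  linarith

lemma orig_eq_F {P1 P2 Q σ2 lam μ : ℝ} (hP1 : 0 < P1) (hP2 : 0 < P2) (hQ : 0 < Q)
    (hσ : 0 < σ2) {p : ℝ × ℝ} (hp : p ∈ Sq) :
    ((μ - 1) / 2) * Real.log (1 + p.1 * P1 / σ2) + Rsum P1 P2 σ2 p.1 p.2
        + (lam / 2) * Real.log (Q / Dfun P1 P2 Q σ2 p.1 p.2)
      = Ffun P1 P2 Q σ2 lam μ p + (-(((μ - 1) / 2) + 1 / 2) * Real.log σ2) := by
  have h1 : 0 ≤ p.1 := hp.1.1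
  have h2 : 0 ≤ p.2 := hp.2.1
  have hA : (0:ℝ) < σ2 + p.1 * P1 := by nlinarith
  have hB : (0:ℝ) < σ2 + p.1 * P1 + p.2 * P2 := by nlinarith
  have hL := Lfun_pos hP1 hP2 hQ hσ p.1 p.2
  have e1 : 1 + p.1 * P1 / σ2 = (σ2 + p.1 * P1) / σ2 := by field_simp
  have e2 : 1 + (p.1 * P1 + p.2 * P2) / σ2 = (σ2 + p.1 * P1 + p.2 * P2) / σ2 := by
    field_simp; ring
  have e3 : Q / Dfun P1 P2 Q σ2 p.1 p.2
      = Lfun P1 P2 Q σ2 p.1 p.2 / (σ2 + p.1 * P1 + p.2 * P2) := by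
    rw [Dfun, div_div_eq_mul_div, mul_div_mul_left _ _ hQ.ne']
  rw [Rsum, e1, e2, e3, Real.log_div hA.ne' hσ.ne', Real.log_div hB.ne' hσ.ne',
    Real.log_div hL.ne' hB.ne', Ffun]
  ring

theorem stmt_4 (P1 P2 Q σ2 : ℝ) (hP1 : 0 < P1) (hP2 : 0 < P2) (hQ : 0 < Q) (hσ : 0 < σ2)
    (lam μ : ℝ) (hlam : 0 < lam) (hlam1 : lam < 1) (hμ : 1 ≤ μ) :
    ∃! p : ℝ × ℝ, p ∈ Set.Icc (0:ℝ) 1 ×ˢ Set.Icc (0:ℝ) 1 ∧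
      ∀ q ∈ Set.Icc (0:ℝ) 1 ×ˢ Set.Icc (0:ℝ) 1,
        ((μ - 1) / 2) * Real.log (1 + q.1 * P1 / σ2) + Rsum P1 P2 σ2 q.1 q.2
            + (lam / 2) * Real.log (Q / Dfun P1 P2 Q σ2 q.1 q.2)
          ≤ ((μ - 1) / 2) * Real.log (1 + p.1 * P1 / σ2) + Rsum P1 P2 σ2 p.1 p.2
            + (lam / 2) * Real.log (Q / Dfun P1 P2 Q σ2 p.1 p.2) := by
  obtain ⟨p, ⟨hpS, hpmax⟩, huniq⟩ := F_existsUnique hP1 hP2 hQ hσ hlam hlam1 hμ (μ := μ)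
  refine ⟨p, ⟨hpS, fun q hq => ?_⟩, fun q hq => huniq q ⟨hq.1, fun r hr => ?_⟩⟩
  · rw [orig_eq_F hP1 hP2 hQ hσ hq (lam := lam) (μ := μ),
      orig_eq_F hP1 hP2 hQ hσ hpS (lam := lam) (μ := μ)]
    exact add_le_add_left (hpmax q hq) _
  · have hthis := hq.2 r hr
    rw [orig_eq_F hP1 hP2 hQ hσ hr (lam := lam) (μ := μ),
      orig_eq_F hP1 hP2 hQ hσ hq.1 (lam := lam) (μ := μ)] at hthis
    linarith
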